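/- Let (A, Con, Δ, ⊢) be a normal default structure. Every information state x of the underlying information system has at least one extension. -/

import Mathlib

/-- A set is consistent if every finite subset of it lies in Con. -/
def IsCons {α : Type*} (Con : Set α → Prop) (S : Set α) : Prop :=
  ∀ X : Set α, X ⊆ S → X.Finite → Con X

/-- F(X) := {a ∈ A | ∃ finite Y ⊆ X with Y ∈ Con and Y ⊢ a}. -/
def Fop {α : Type*} (Con : Set α → Prop) (ent : Set α → α → Prop) (S : Set α) : Set α :=
  {a | ∃ Y : Set α, Y ⊆ S ∧ Y.Finite ∧ Con Y ∧ ent Y a}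

/-- φ(x, S, 0) = x and
φ(x, S, i+1) = F(φ(x, S, i)) ∪ {a | (X, a) ∈ Δ, X ⊆ φ(x, S, i), {a} ∪ S consistent}. -/
def phi {α : Type*} (Con : Set α → Prop) (ent : Set α → α → Prop)
    (Δ : Set (Set α × α)) (x S : Set α) : ℕ → Set α
  | 0 => x
  | i + 1 =>
      Fop Con ent (phi Con ent Δ x S i) ∪
        {a | ∃ X : Set α, (X, a) ∈ Δ ∧ X ⊆ phi Con ent Δ x S i ∧ IsCons Con ({a} ∪ S)}

/-- Φ(x, S) = ⋃_{i≥0} φ(x, S, i). -/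
def Phi {α : Type*} (Con : Set α → Prop) (ent : Set α → α → Prop)
    (Δ : Set (Set α × α)) (x S : Set α) : Set α :=
  ⋃ i, phi Con ent Δ x S i

/-- An information state is a set of the form F(X) with X consistent. -/
def IsState {α : Type*} (Con : Set α → Prop) (ent : Set α → α → Prop) (x : Set α) : Prop :=
  ∃ X : Set α, IsCons Con X ∧ x = Fop Con ent X

/-- An information state y is an extension of x (written x ε y) if Φ(x, y) = y. -/
def IsExt {α : Type*} (Con : Set α → Prop) (ent : Set α → α → Prop)
    (Δ : Set (Set α × α)) (x y : Set α) : Prop :=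
  IsState Con ent y ∧ Phi Con ent Δ x y = y

section Helpers
variable {α : Type*} {Con : Set α → Prop} {ent : Set α → α → Prop}

lemma isCons_mono {S T : Set α} (h : S ⊆ T) (hT : IsCons Con T) : IsCons Con S :=
  fun X hX hXf => hT X (hX.trans h) hXf

lemma subset_Fop (hCsing : ∀ a : α, Con {a})
    (hRefl : ∀ (X : Set α) (a : α), a ∈ X → Con X → ent X a)
    (S : Set α) : S ⊆ Fop Con ent S := fun a ha =>
  ⟨{a}, Set.singleton_subset_iff.2 ha, Set.finite_singleton a, hCsing a,
    hRefl _ a rfl (hCsing a)⟩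

lemma Fop_mono {S T : Set α} (h : S ⊆ T) : Fop Con ent S ⊆ Fop Con ent T :=
  fun a ⟨Y, hYS, hYf, hYC, hYe⟩ => ⟨Y, hYS.trans h, hYf, hYC, hYe⟩

lemma ent_weaken
    (hRefl : ∀ (X : Set α) (a : α), a ∈ X → Con X → ent X a)
    (hTrans : ∀ (X Y : Set α) (c : α), (∀ b ∈ Y, ent X b) → ent Y c → ent X c)
    {Y Z : Set α} {a : α} (h : ent Y a) (hYZ : Y ⊆ Z) (hZ : Con Z) : ent Z a :=
  hTrans Z Y a (fun b hb => hRefl Z b (hYZ hb) hZ) h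

lemma con_union_of_ent
    (hCsub : ∀ X Y : Set α, X ⊆ Y → Con Y → Con X)
    (hEntAdd : ∀ (X : Set α) (a : α), ent X a → Con X → Con (X ∪ {a}))
    (hRefl : ∀ (X : Set α) (a : α), a ∈ X → Con X → ent X a)
    (hTrans : ∀ (X Y : Set α) (c : α), (∀ b ∈ Y, ent X b) → ent Y c → ent X c)
    {Z W : Set α} (hWf : W.Finite) (hZ : Con Z) (h : ∀ a ∈ W, ent Z a) :
    Con (Z ∪ W) := by
  revert h
  refine Set.Finite.induction_on W hWf (fun _ => by simpa using hZ) ?_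
  intro a W' ha hW'f IH h
  have hZW' : Con (Z ∪ W') := IH (fun b hb => h b (Set.mem_insert_of_mem a hb))
  have hea : ent (Z ∪ W') a :=
    ent_weaken hRefl hTrans (h a (Set.mem_insert a W')) Set.subset_union_left hZW'
  have hbig := hEntAdd _ a hea hZW'
  refine hCsub _ _ ?_ hbig
  intro b hb
  simp only [Set.mem_union, Set.mem_insert_iff, Set.mem_singleton_iff] at hb ⊢
  tauto

lemma isCons_Fop
    (hCsub : ∀ X Y : Set α, X ⊆ Y → Con Y → Con X)
    (hEntAdd : ∀ (X : Set α) (a : α), ent X a → Con X → Con (X ∪ {a}))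
    (hRefl : ∀ (X : Set α) (a : α), a ∈ X → Con X → ent X a)
    (hTrans : ∀ (X Y : Set α) (c : α), (∀ b ∈ Y, ent X b) → ent Y c → ent X c)
    {S : Set α} (hS : IsCons Con S) : IsCons Con (Fop Con ent S) := by
  intro W hW hWf
  classical
  have h := fun a (ha : a ∈ W) => hW ha
  choose! Y h1 h2 h3 h4 using h
  set Z : Set α := ⋃ a ∈ W, Y a with hZdef
  have hZS : Z ⊆ S := Set.iUnion₂_subset fun a ha => h1 a ha
  have hZf : Z.Finite := hWf.biUnion fun a ha => h2 a ha
  have hZC : Con Z := hS Z hZS hZf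
  have hent : ∀ a ∈ W, ent Z a := fun a ha =>
    ent_weaken hRefl hTrans (h4 a ha)
      (Set.subset_biUnion_of_mem (u := fun a => Y a) ha) hZC
  exact hCsub _ _ Set.subset_union_right
    (con_union_of_ent hCsub hEntAdd hRefl hTrans hWf hZC hent)

lemma finite_subset_chain {c : Set (Set α)} (hc : IsChain (· ⊆ ·) c)
    (hne : c.Nonempty) {W : Set α} (hWf : W.Finite) (hW : W ⊆ ⋃₀ c) :
    ∃ D ∈ c, W ⊆ D := by
  revert hW
  refine Set.Finite.induction_on W hWf
    (fun _ => ⟨hne.choose, hne.choose_spec, Set.empty_subset _⟩) ?_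
  intro a W' ha hW'f IH hW
  obtain ⟨D, hDc, hWD⟩ := IH ((Set.subset_insert a W').trans hW)
  obtain ⟨D', hD'c, haD'⟩ := hW (Set.mem_insert a W')
  rcases hc.total hDc hD'c with h | h
  · exact ⟨D', hD'c, Set.insert_subset haD' (hWD.trans h)⟩
  · exact ⟨D, hDc, Set.insert_subset (h haD') hWD⟩

lemma finite_subset_mono {s : ℕ → Set α} (hmono : Monotone s) {W : Set α}
    (hWf : W.Finite) (hW : W ⊆ ⋃ i, s i) : ∃ n, W ⊆ s n := by
  have hc : IsChain (· ⊆ ·) (Set.range s) := by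
    rintro _ ⟨i, rfl⟩ _ ⟨j, rfl⟩ _
    rcases le_total i j with h | h
    · exact Or.inl (hmono h)
    · exact Or.inr (hmono h)
  have : W ⊆ ⋃₀ Set.range s := by rwa [Set.sUnion_range]
  obtain ⟨D, ⟨n, rfl⟩, hWD⟩ := finite_subset_chain hc ⟨s 0, 0, rfl⟩ hWf this
  exact ⟨n, hWD⟩

end Helpers

/-- every information state x has at least one extension. -/
theorem extension_exists {α : Type*} (Con : Set α → Prop) (ent : Set α → α → Prop)
    (Δ : Set (Set α × α))
    (hCfin : ∀ X : Set α, Con X → X.Finite)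
    (hCempty : Con ∅)
    (hEntCon : ∀ (X : Set α) (a : α), ent X a → Con X)
    (hCsub : ∀ X Y : Set α, X ⊆ Y → Con Y → Con X)
    (hCsing : ∀ a : α, Con {a})
    (hEntAdd : ∀ (X : Set α) (a : α), ent X a → Con X → Con (X ∪ {a}))
    (hRefl : ∀ (X : Set α) (a : α), a ∈ X → Con X → ent X a)
    (hTrans : ∀ (X Y : Set α) (c : α), (∀ b ∈ Y, ent X b) → ent Y c → ent X c)
    -- Δ is a set of normal default rules, each a pair (X, a) with X ∈ Con
    (hDelta : ∀ p ∈ Δ, Con p.1) :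
    ∀ x : Set α, IsState Con ent x → ∃ y : Set α, IsExt Con ent Δ x y := by
  --

  classical
  intro x hx
  obtain ⟨X0, hX0c, hxeq⟩ := hx
  have hxcons : IsCons Con x := hxeq ▸ isCons_Fop hCsub hEntAdd hRefl hTrans hX0c
  have hzorn : ∀ S : Set α, IsCons Con S →
      ∃ D, Maximal (fun D => D ⊆ {a | ∃ X, (X, a) ∈ Δ ∧ X ⊆ S} ∧ IsCons Con (S ∪ D)) D := by
    intro S hS
    have hz := zorn_subset_nonempty
      {D | D ⊆ {a | ∃ X, (X, a) ∈ Δ ∧ X ⊆ S} ∧ IsCons Con (S ∪ D)} ?_ ∅ ?_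
    · obtain ⟨m, -, hm⟩ := hz
      exact ⟨m, hm⟩
    · intro c hcS hchain hcne
      refine ⟨⋃₀ c, ⟨Set.sUnion_subset fun D hD => (hcS hD).1, ?_⟩,
        fun s hs => Set.subset_sUnion_of_mem hs⟩
      intro W hW hWf
      have hsplit : W \ S ⊆ ⋃₀ c := by
        intro b hb
        rcases hW hb.1 with h | h
        · exact absurd h hb.2
        · exact h
      obtain ⟨D, hDc, hWD⟩ := finite_subset_chain hchain hcne hWf.diff hsplit
      refine (hcS hDc).2 W ?_ hWf
      intro b hb
      by_cases hbS : b ∈ S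
      · exact Or.inl hbS
      · exact Or.inr (hWD ⟨hb, hbS⟩)
    · exact ⟨Set.empty_subset _, by simpa using hS⟩
  choose! Dm hDm using hzorn
  let ψ : ℕ → Set α := fun n => Nat.rec x (fun _ S => Fop Con ent (S ∪ Dm S)) n
  have hψ0 : ψ 0 = x := rfl
  have hψs : ∀ n, ψ (n + 1) = Fop Con ent (ψ n ∪ Dm (ψ n)) := fun n => rfl
  have hψcons : ∀ n, IsCons Con (ψ n) := by
    intro n
    induction n with
    | zero => exact hxcons
    | succ n IH =>
      have h2 := (hDm (ψ n) IH).1.2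
      rw [hψs n]
      exact isCons_Fop hCsub hEntAdd hRefl hTrans h2
  have hψstep : ∀ n, ψ n ∪ Dm (ψ n) ⊆ ψ (n + 1) := by
    intro n
    rw [hψs n]
    exact subset_Fop hCsing hRefl _
  have hψmono : Monotone ψ := monotone_nat_of_le_succ (fun n =>
    Set.subset_union_left.trans (hψstep n))
  set y := ⋃ n, ψ n with hydef
  have hψy : ∀ n, ψ n ⊆ y := fun n => Set.subset_iUnion ψ n
  have hycons : IsCons Con y := by
    intro W hW hWf
    obtain ⟨n, hn⟩ := finite_subset_mono hψmono hWf hW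
    exact hψcons n W hn hWf
  have hyF : Fop Con ent y = y := by
    apply Set.Subset.antisymm
    · rintro a ⟨Y, hYy, hYf, hYC, hYe⟩
      obtain ⟨n, hn⟩ := finite_subset_mono hψmono hYf hYy
      have ha : a ∈ Fop Con ent (ψ n ∪ Dm (ψ n)) :=
        ⟨Y, hn.trans Set.subset_union_left, hYf, hYC, hYe⟩
      rw [← hψs n] at ha
      exact hψy (n + 1) ha
    · exact subset_Fop hCsing hRefl y
  have hfire : ∀ n a, (∃ X, (X, a) ∈ Δ ∧ X ⊆ ψ n) → IsCons Con ({a} ∪ y) →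
      a ∈ Dm (ψ n) := by
    rintro n a ⟨X, hXΔ, hXψ⟩ hacons
    have hmax := hDm (ψ n) (hψcons n)
    have hP : (insert a (Dm (ψ n))) ⊆ {b | ∃ X, (X, b) ∈ Δ ∧ X ⊆ ψ n} ∧
        IsCons Con (ψ n ∪ insert a (Dm (ψ n))) := by
      refine ⟨Set.insert_subset ⟨X, hXΔ, hXψ⟩ hmax.1.1, isCons_mono ?_ hacons⟩
      intro b hb
      rcases (Set.mem_union _ _ _).1 hb with hb | hb
      · exact Set.mem_union_right _ (hψy n hb)
      · rcases Set.mem_insert_iff.1 hb with rfl | hb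
        · exact Set.mem_union_left _ rfl
        · exact Set.mem_union_right _ (hψy (n + 1) (hψstep n (Set.mem_union_right _ hb)))
    exact hmax.2 hP (Set.subset_insert a _) (Set.mem_insert a _)
  have hphiψ : ∀ i, phi Con ent Δ x y i ⊆ ψ i := by
    intro i
    induction i with
    | zero => exact subset_rfl
    | succ i IH =>
      intro a ha
      rcases ha with ha | ⟨X, hXΔ, hXφ, hacons⟩
      · have : a ∈ Fop Con ent (ψ i ∪ Dm (ψ i)) :=
          Fop_mono (IH.trans Set.subset_union_left) ha
        rwa [← hψs i] at this
      · exact hψstep i (Set.mem_union_right _ (hfire i a ⟨X, hXΔ, hXφ.trans IH⟩ hacons))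
  have hPhiy : Phi Con ent Δ x y ⊆ y :=
    Set.iUnion_subset fun i => (hphiψ i).trans (hψy i)
  have hphimono : Monotone (phi Con ent Δ x y) := monotone_nat_of_le_succ (fun n =>
    (subset_Fop hCsing hRefl _).trans Set.subset_union_left)
  have hPhiclosed : Fop Con ent (Phi Con ent Δ x y) ⊆ Phi Con ent Δ x y := by
    rintro a ⟨Y, hY, hYf, hYC, hYe⟩
    obtain ⟨n, hn⟩ := finite_subset_mono hphimono hYf hY
    exact Set.mem_iUnion.2 ⟨n + 1, Or.inl ⟨Y, hn, hYf, hYC, hYe⟩⟩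
  have hψPhi : ∀ n, ψ n ⊆ Phi Con ent Δ x y := by
    intro n
    induction n with
    | zero => exact Set.subset_iUnion (phi Con ent Δ x y) 0
    | succ n IH =>
      rw [hψs n]
      refine (Fop_mono ?_).trans hPhiclosed
      intro a ha
      rcases (Set.mem_union _ _ _).1 ha with ha | ha
      · exact IH ha
      · obtain ⟨X, hXΔ, hXψ⟩ := (hDm (ψ n) (hψcons n)).1.1 ha
        have hXfin : X.Finite := hCfin X (hDelta (X, a) hXΔ)
        obtain ⟨m, hm⟩ := finite_subset_mono hphimono hXfin (hXψ.trans IH)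
        have hacons : IsCons Con ({a} ∪ y) := by
          refine isCons_mono ?_ hycons
          intro b hb
          rcases (Set.mem_union _ _ _).1 hb with hb | hb
          · rcases Set.mem_singleton_iff.1 hb with rfl
            exact hψy (n + 1) (hψstep n (Set.mem_union_right _ ha))
          · exact hb
        exact Set.mem_iUnion.2 ⟨m + 1, Or.inr ⟨X, hXΔ, hm, hacons⟩⟩
  exact ⟨y, ⟨y, hycons, hyF.symm⟩, Set.Subset.antisymm hPhiy (Set.iUnion_subset hψPhi)⟩
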